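/- Let p > 0 and let g_p : [0,1/2] → [0,1], g_p(x) = x + 2^p x^{p+1}, with inverse g_p^{-1}. Let h_0 : [0,1] → (0,∞) be continuous and define ρ(x) := h_0(x) · x / (x − g_p^{-1}(x)) for x ∈ (0,1]. Then for every sequence (η_n) in (0,1] with η_n → 0, lim_{n→∞} (1/η_n) ∫_{g_p^{-1}(η_n)}^{η_n} ρ(x) dx = h_0(0). -/

import Mathlib

open Filter Set MeasureTheory

/-- The first (left) branch of the LSV map: `g_p(x) = x + 2^p x^(p+1)`. -/
noncomputable def lsvBranch (p : ℝ) (x : ℝ) : ℝ := x + 2 ^ p * x ^ (p + 1)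

private lemma lsv_strictMono (p : ℝ) (hp : 0 < p) {u v : ℝ} (hu : 0 ≤ u) (huv : u < v) :
    lsvBranch p u < lsvBranch p v := by
  unfold lsvBranch
  have h1 : u ^ (p + 1) ≤ v ^ (p + 1) := Real.rpow_le_rpow hu huv.le (by linarith)
  have h2 : (0:ℝ) < 2 ^ p := Real.rpow_pos_of_pos (by norm_num) p
  nlinarith

section aux

variable {p : ℝ} {ginv : ℝ → ℝ}

private lemma gid (hginv : ∀ x ∈ Icc (0 : ℝ) 1, ginv x ∈ Icc (0 : ℝ) (1 / 2) ∧ lsvBranch p (ginv x) = x)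
    {t : ℝ} (ht : t ∈ Icc (0:ℝ) 1) : t - ginv t = 2 ^ p * (ginv t) ^ (p + 1) := by
  have := (hginv t ht).2
  unfold lsvBranch at this
  linarith

private lemma ginv_nonneg (hginv : ∀ x ∈ Icc (0 : ℝ) 1, ginv x ∈ Icc (0 : ℝ) (1 / 2) ∧ lsvBranch p (ginv x) = x)
    {t : ℝ} (ht : t ∈ Icc (0:ℝ) 1) : 0 ≤ ginv t := (hginv t ht).1.1

private lemma ginv_le (hp : 0 < p)
    (hginv : ∀ x ∈ Icc (0 : ℝ) 1, ginv x ∈ Icc (0 : ℝ) (1 / 2) ∧ lsvBranch p (ginv x) = x)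
    {t : ℝ} (ht : t ∈ Icc (0:ℝ) 1) : ginv t ≤ t := by
  have h1 := gid hginv ht
  have h2 : (0:ℝ) < 2 ^ p := Real.rpow_pos_of_pos (by norm_num) p
  have h3 : 0 ≤ (ginv t) ^ (p + 1) := Real.rpow_nonneg (ginv_nonneg hginv ht) _
  nlinarith

private lemma ginv_pos (hp : 0 < p)
    (hginv : ∀ x ∈ Icc (0 : ℝ) 1, ginv x ∈ Icc (0 : ℝ) (1 / 2) ∧ lsvBranch p (ginv x) = x)
    {t : ℝ} (ht : t ∈ Ioc (0:ℝ) 1) : 0 < ginv t := by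
  have ht' : t ∈ Icc (0:ℝ) 1 := Ioc_subset_Icc_self ht
  rcases (ginv_nonneg hginv ht').lt_or_eq with h | h
  · exact h
  · exfalso
    have h2 := (hginv t ht').2
    rw [← h] at h2
    unfold lsvBranch at h2
    rw [Real.zero_rpow (by positivity)] at h2
    simp at h2
    linarith [ht.1]

private lemma ginv_mono (hp : 0 < p)
    (hginv : ∀ x ∈ Icc (0 : ℝ) 1, ginv x ∈ Icc (0 : ℝ) (1 / 2) ∧ lsvBranch p (ginv x) = x)
    {s t : ℝ} (hs : s ∈ Icc (0:ℝ) 1) (ht : t ∈ Icc (0:ℝ) 1) (hst : s ≤ t) :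
    ginv s ≤ ginv t := by
  by_contra h
  push_neg at h
  have := lsv_strictMono p hp (ginv_nonneg hginv ht) h
  rw [(hginv t ht).2, (hginv s hs).2] at this
  linarith

private lemma ginv_lb (hp : 0 < p)
    (hginv : ∀ x ∈ Icc (0 : ℝ) 1, ginv x ∈ Icc (0 : ℝ) (1 / 2) ∧ lsvBranch p (ginv x) = x)
    {t : ℝ} (ht : t ∈ Ioc (0:ℝ) 1) : t * (1 - 2 ^ p * t ^ p) ≤ ginv t := by
  have ht' : t ∈ Icc (0:ℝ) 1 := Ioc_subset_Icc_self ht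
  have h1 := gid hginv ht'
  have h2 : (ginv t) ^ (p + 1) ≤ t ^ (p + 1) :=
    Real.rpow_le_rpow (ginv_nonneg hginv ht') (ginv_le hp hginv ht') (by linarith)
  have h3 : t ^ (p + 1) = t ^ p * t := Real.rpow_add_one (ne_of_gt ht.1) p
  have h4 : (0:ℝ) < 2 ^ p := Real.rpow_pos_of_pos (by norm_num) p
  nlinarith

private lemma key (hp : 0 < p)
    (hginv : ∀ x ∈ Icc (0 : ℝ) 1, ginv x ∈ Icc (0 : ℝ) (1 / 2) ∧ lsvBranch p (ginv x) = x)
    {h0 : ℝ → ℝ} (h0cont : ContinuousOn h0 (Icc 0 1))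
    (h0pos : ∀ x ∈ Icc (0 : ℝ) 1, 0 < h0 x)
    {ρ : ℝ → ℝ} (hρ : ∀ x, ρ x = h0 x * x / (x - ginv x))
    {t ε' : ℝ} (ht : t ∈ Ioc (0:ℝ) 1) (hε' : 0 < ε') (hm : 0 ≤ h0 0 - ε')
    (hc : 0 < 1 - 2 ^ p * t ^ p)
    (hb : ∀ x ∈ Icc (0:ℝ) t, h0 0 - ε' ≤ h0 x ∧ h0 x ≤ h0 0 + ε') :
    (h0 0 - ε') * (1 - 2 ^ p * t ^ p) ≤ (1 / t) * ∫ x in (ginv t)..t, ρ x ∧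
      (1 / t) * ∫ x in (ginv t)..t, ρ x ≤ (h0 0 + ε') / (1 - 2 ^ p * t ^ p) ^ (p + 1) := by
  have ht' : t ∈ Icc (0:ℝ) 1 := Ioc_subset_Icc_self ht
  set a := ginv t with ha_def
  set c := 1 - 2 ^ p * t ^ p with hc_def
  have h2p : (0:ℝ) < 2 ^ p := Real.rpow_pos_of_pos (by norm_num) p
  have hpp1 : (0:ℝ) < p + 1 := by linarith
  have ha0 : 0 < a := ginv_pos hp hginv ht
  have ha1 : a ∈ Icc (0:ℝ) 1 := ⟨ha0.le, le_trans (hginv t ht').1.2 (by norm_num)⟩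
  have ha1' : a ∈ Ioc (0:ℝ) 1 := ⟨ha0, ha1.2⟩
  have hat : a ≤ t := ginv_le hp hginv ht'
  have hL : 0 < t - a := by
    have h1 := gid hginv ht'
    have h2 : 0 < 2 ^ p * a ^ (p + 1) := by
      have := Real.rpow_pos_of_pos ha0 (p + 1); positivity
    linarith
  have hcp1 : 0 < c ^ (p + 1) := Real.rpow_pos_of_pos hc _
  have hMp : 0 ≤ h0 0 + ε' := by linarith
  have hmem01 : ∀ x ∈ Icc a t, x ∈ Icc (0:ℝ) 1 := fun x hx =>
    ⟨le_trans ha0.le hx.1, le_trans hx.2 ht'.2⟩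
  have hden_ub : ∀ x ∈ Icc a t, x - ginv x ≤ t - a := by
    intro x hx
    have hx01 := hmem01 x hx
    have h1 := gid hginv hx01
    have h2 : ginv x ≤ a := ginv_mono hp hginv hx01 ht' hx.2
    have h3 : (ginv x) ^ (p + 1) ≤ a ^ (p + 1) :=
      Real.rpow_le_rpow (ginv_nonneg hginv hx01) h2 hpp1.le
    have h4 := gid hginv ht'
    nlinarith
  have hden_lb : ∀ x ∈ Icc a t, (t - a) * c ^ (p + 1) ≤ x - ginv x := by
    intro x hx
    have hx01 := hmem01 x hx
    have h1 := gid hginv hx01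
    have h3 : a ^ p ≤ t ^ p := Real.rpow_le_rpow ha0.le hat hp.le
    have hga : a * c ≤ ginv a := by
      have h2 := ginv_lb hp hginv ha1'
      have h3' : 2 ^ p * a ^ p ≤ 2 ^ p * t ^ p := mul_le_mul_of_nonneg_left h3 h2p.le
      nlinarith [mul_le_mul_of_nonneg_left h3' ha0.le]
    have h5 : (a * c) ^ (p + 1) ≤ (ginv a) ^ (p + 1) :=
      Real.rpow_le_rpow (by positivity) hga hpp1.le
    have h6 : (a * c) ^ (p + 1) = a ^ (p + 1) * c ^ (p + 1) := Real.mul_rpow ha0.le hc.le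
    have h7 : ginv a ≤ ginv x := ginv_mono hp hginv ha1 hx01 hx.1
    have h8 : (ginv a) ^ (p + 1) ≤ (ginv x) ^ (p + 1) :=
      Real.rpow_le_rpow (ginv_nonneg hginv ha1) h7 hpp1.le
    have h9 := gid hginv ht'
    nlinarith
  have hden_pos : ∀ x ∈ Icc a t, 0 < x - ginv x := fun x hx =>
    lt_of_lt_of_le (by positivity) (hden_lb x hx)
  have hρ_lb : ∀ x ∈ Icc a t, (h0 0 - ε') * a / (t - a) ≤ ρ x := by
    intro x hx
    rw [hρ]
    have hx01 := hmem01 x hx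
    have hnum : (h0 0 - ε') * a ≤ h0 x * x :=
      mul_le_mul (hb x ⟨hx01.1, hx.2⟩).1 hx.1 ha0.le (h0pos x hx01).le
    exact div_le_div₀ (mul_nonneg (h0pos x hx01).le hx01.1) hnum (hden_pos x hx) (hden_ub x hx)
  have hρ_ub : ∀ x ∈ Icc a t, ρ x ≤ (h0 0 + ε') * t / ((t - a) * c ^ (p + 1)) := by
    intro x hx
    rw [hρ]
    have hx01 := hmem01 x hx
    have hnum : h0 x * x ≤ (h0 0 + ε') * t :=
      mul_le_mul (hb x ⟨hx01.1, hx.2⟩).2 hx.2 hx01.1 hMp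
    exact div_le_div₀ (mul_nonneg hMp ht'.1) hnum (mul_pos hL hcp1) (hden_lb x hx)
  -- integrability of ρ on the interval
  have hclamp : ∀ x : ℝ, max 0 (min 1 x) ∈ Icc (0:ℝ) 1 :=
    fun x => ⟨le_max_left _ _, max_le (by norm_num) (min_le_left _ _)⟩
  have hGmono : Monotone (fun x => ginv (max 0 (min 1 x))) := fun x y hxy =>
    ginv_mono hp hginv (hclamp x) (hclamp y) (max_le_max le_rfl (min_le_min le_rfl hxy))
  have hGmeas : Measurable (fun x : ℝ => ginv (max 0 (min 1 x))) := hGmono.measurable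
  have h0'cont : Continuous (fun x : ℝ => h0 (max 0 (min 1 x))) :=
    h0cont.comp_continuous (continuous_const.max (continuous_const.min continuous_id)) hclamp
  have hρ'meas : Measurable (fun x : ℝ => h0 (max 0 (min 1 x)) * x / (x - ginv (max 0 (min 1 x)))) :=
    (h0'cont.measurable.mul measurable_id).div (measurable_id.sub hGmeas)
  have hEq : EqOn (fun x : ℝ => h0 (max 0 (min 1 x)) * x / (x - ginv (max 0 (min 1 x)))) ρ (Ioc a t) := by
    intro x hx
    have hx01 : x ∈ Icc (0:ℝ) 1 := ⟨(ha0.trans hx.1).le, hx.2.trans ht'.2⟩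
    have h1 : max 0 (min 1 x) = x := by
      rw [min_eq_right hx01.2, max_eq_right hx01.1]
    simp only [h1, hρ x]
  have hint' : IntegrableOn (fun x : ℝ => h0 (max 0 (min 1 x)) * x / (x - ginv (max 0 (min 1 x))))
      (Ioc a t) := by
    apply Integrable.mono' (g := fun _ => (h0 0 + ε') * t / ((t - a) * c ^ (p + 1)))
      (integrableOn_const measure_Ioc_lt_top.ne) hρ'meas.aestronglyMeasurable
    filter_upwards [ae_restrict_mem measurableSet_Ioc] with x hx
    have hx' : x ∈ Icc a t := Ioc_subset_Icc_self hx
    have e : h0 (max 0 (min 1 x)) * x / (x - ginv (max 0 (min 1 x))) = ρ x := hEq hx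
    rw [e, Real.norm_eq_abs, abs_le]
    constructor
    · have h1 := hρ_lb x hx'
      have h2 : 0 ≤ (h0 0 - ε') * a / (t - a) := div_nonneg (mul_nonneg hm ha0.le) hL.le
      have h3 : 0 ≤ (h0 0 + ε') * t / ((t - a) * c ^ (p + 1)) :=
        div_nonneg (mul_nonneg hMp ht'.1) (mul_pos hL hcp1).le
      linarith
    · exact hρ_ub x hx'
  have hintρ : IntervalIntegrable ρ volume a t :=
    (intervalIntegrable_iff_integrableOn_Ioc_of_le hat).2 (hint'.congr_fun hEq measurableSet_Ioc)
  -- integral bounds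
  have hI_lb : (t - a) * ((h0 0 - ε') * a / (t - a)) ≤ ∫ x in a..t, ρ x := by
    have h := intervalIntegral.integral_mono_on hat intervalIntegrable_const hintρ
      (fun x hx => hρ_lb x hx)
    rwa [intervalIntegral.integral_const, smul_eq_mul] at h
  have hI_ub : (∫ x in a..t, ρ x) ≤ (t - a) * ((h0 0 + ε') * t / ((t - a) * c ^ (p + 1))) := by
    have h := intervalIntegral.integral_mono_on hat hintρ intervalIntegrable_const
      (fun x hx => hρ_ub x hx)
    rwa [intervalIntegral.integral_const, smul_eq_mul] at h
  constructor
  · have e1 : (t - a) * ((h0 0 - ε') * a / (t - a)) = (h0 0 - ε') * a := by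
      field_simp
    have e2 : (h0 0 - ε') * (t * c) ≤ (h0 0 - ε') * a :=
      mul_le_mul_of_nonneg_left (ginv_lb hp hginv ht) hm
    have e3 : (h0 0 - ε') * (t * c) ≤ ∫ x in a..t, ρ x := by
      rw [e1] at hI_lb; linarith
    calc (h0 0 - ε') * c = (1 / t) * ((h0 0 - ε') * (t * c)) := by
          field_simp [ht.1.ne']
      _ ≤ (1 / t) * ∫ x in a..t, ρ x :=
          mul_le_mul_of_nonneg_left e3 (one_div_nonneg.2 ht.1.le)
  · have e1 : (t - a) * ((h0 0 + ε') * t / ((t - a) * c ^ (p + 1))) =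
        (h0 0 + ε') * t / c ^ (p + 1) := by
      rw [mul_comm, mul_comm (t - a) (c ^ (p + 1)), div_mul_eq_div_div, div_mul_cancel₀ _ (ne_of_gt hL)]
    calc (1 / t) * ∫ x in a..t, ρ x
        ≤ (1 / t) * ((h0 0 + ε') * t / c ^ (p + 1)) := by
          rw [e1] at hI_ub
          exact mul_le_mul_of_nonneg_left hI_ub (one_div_nonneg.2 ht.1.le)
      _ = (h0 0 + ε') / c ^ (p + 1) := by
          field_simp [ht.1.ne']

end aux

theorem stmt9 (p : ℝ) (hp : 0 < p) (ginv : ℝ → ℝ)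
    (hginv : ∀ x ∈ Icc (0 : ℝ) 1, ginv x ∈ Icc (0 : ℝ) (1 / 2) ∧ lsvBranch p (ginv x) = x)
    (h0 : ℝ → ℝ) (h0cont : ContinuousOn h0 (Icc 0 1))
    (h0pos : ∀ x ∈ Icc (0 : ℝ) 1, 0 < h0 x)
    (ρ : ℝ → ℝ) (hρ : ∀ x, ρ x = h0 x * x / (x - ginv x))
    (η : ℕ → ℝ) (hη_mem : ∀ n, η n ∈ Ioc (0 : ℝ) 1) (hη : Tendsto η atTop (nhds 0)) :
    Tendsto (fun n => (1 / η n) * ∫ x in (ginv (η n))..(η n), ρ x) atTop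
      (nhds (h0 0)) := by
  have h00pos : 0 < h0 0 := h0pos 0 (by norm_num)
  rw [Metric.tendsto_nhds]
  intro ε hε
  set ε' := min (ε / 2) (h0 0 / 2) with hε'_def
  have hε'pos : 0 < ε' := lt_min (by linarith) (by linarith)
  have hε'le : ε' ≤ ε / 2 := min_le_left _ _
  have hm : 0 ≤ h0 0 - ε' := by
    have := min_le_right (ε / 2) (h0 0 / 2); simp only [← hε'_def] at this; linarith
  -- continuity of h0 at 0 within Icc 0 1
  have hc0 : ContinuousWithinAt h0 (Icc 0 1) 0 := h0cont 0 (by norm_num)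
  rw [Metric.continuousWithinAt_iff] at hc0
  obtain ⟨δ, hδpos, hδ⟩ := hc0 ε' hε'pos
  -- c n → 1
  have hcn : Tendsto (fun n => 1 - 2 ^ p * (η n) ^ p) atTop (nhds 1) := by
    have h1 : Tendsto (fun n => (η n) ^ p) atTop (nhds 0) := by
      have h2 : ContinuousAt (fun x : ℝ => x ^ p) 0 :=
        Real.continuousAt_rpow_const 0 p (Or.inr hp.le)
      have h3 := h2.tendsto.comp hη
      rwa [Real.zero_rpow hp.ne'] at h3
    have h4 : Tendsto (fun n => 1 - 2 ^ p * (η n) ^ p) atTop (nhds (1 - 2 ^ p * 0)) :=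
      tendsto_const_nhds.sub (h1.const_mul _)
    simpa using h4
  have hlo : Tendsto (fun n => (h0 0 - ε') * (1 - 2 ^ p * (η n) ^ p)) atTop
      (nhds (h0 0 - ε')) := by
    have := hcn.const_mul (h0 0 - ε')
    simpa using this
  have hhi : Tendsto (fun n => (h0 0 + ε') / (1 - 2 ^ p * (η n) ^ p) ^ (p + 1)) atTop
      (nhds (h0 0 + ε')) := by
    have h1 : ContinuousAt (fun x : ℝ => x ^ (p + 1)) 1 :=
      Real.continuousAt_rpow_const 1 (p + 1) (Or.inl one_ne_zero)
    have h2 : Tendsto (fun n => (1 - 2 ^ p * (η n) ^ p) ^ (p + 1)) atTop (nhds 1) := by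
      have := h1.tendsto.comp hcn
      simpa [Real.one_rpow, Function.comp_def] using this
    have h3 := (tendsto_const_nhds (x := h0 0 + ε') (f := atTop)).div h2 one_ne_zero
    simpa [Pi.div_def] using h3
  have E1 : ∀ᶠ n in atTop, η n < δ := hη.eventually (eventually_lt_nhds hδpos)
  have E2 : ∀ᶠ n in atTop, 0 < 1 - 2 ^ p * (η n) ^ p :=
    hcn.eventually (eventually_gt_nhds one_pos)
  have E3 : ∀ᶠ n in atTop, h0 0 - ε < (h0 0 - ε') * (1 - 2 ^ p * (η n) ^ p) :=
    hlo.eventually (eventually_gt_nhds (by linarith))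
  have E4 : ∀ᶠ n in atTop, (h0 0 + ε') / (1 - 2 ^ p * (η n) ^ p) ^ (p + 1) < h0 0 + ε :=
    hhi.eventually (eventually_lt_nhds (by linarith))
  filter_upwards [E1, E2, E3, E4] with n h1 h2 h3 h4
  have hb : ∀ x ∈ Icc (0:ℝ) (η n), h0 0 - ε' ≤ h0 x ∧ h0 x ≤ h0 0 + ε' := by
    intro x hx
    have hx01 : x ∈ Icc (0:ℝ) 1 := ⟨hx.1, hx.2.trans (hη_mem n).2⟩
    have hxδ : dist x 0 < δ := by
      rw [Real.dist_eq, sub_zero, abs_of_nonneg hx.1]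
      exact lt_of_le_of_lt hx.2 h1
    have := hδ hx01 hxδ
    rw [Real.dist_eq] at this
    have := abs_lt.1 this
    constructor <;> linarith [this.1, this.2]
  obtain ⟨K1, K2⟩ := key hp hginv h0cont h0pos hρ (hη_mem n) hε'pos hm h2 hb
  rw [Real.dist_eq, abs_lt]
  constructor <;> linarith
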